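/- (Combinatorial parallel adversary bound, Theorem 2.) With the parallel oracle model and algorithm model below, let X and Y be disjoint finite sets of oracles and F a multi-valued function with F(x) ∩ F(y) = ∅ whenever x ∈ X and y ∈ Y, and let R ⊆ X × Y be a relation. For each tuple (i₁,…,i_p) ∈ (Fin N)^p set R^{i₁⋯i_p} = {(x,y) ∈ R : x_{i_j} ≠ y_{i_j} for some j}. Suppose every x ∈ X is related by R to at least h ≥ 1 elements of Y, every y ∈ Y to at least h' ≥ 1 elements of X, and for every tuple every x is related by R^{i₁⋯i_p} to at most ℓ elements and every y to at most ℓ' elements, with ℓ, ℓ' ≥ 1. If a T-step p-parallel algorithm satisfies, for every x ∈ X ∪ Y, Σ_{basis indices k with out(k) ∈ F(x)} |⟨e_k, ψ_x⟩|² ≥ 9/10, then T ≥ (1/6)·√(h·h' / (ℓ·ℓ')). -/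

import Mathlib

/-- Basis index for the algorithm's Hilbert space: `p` query registers over `Fin N`,
`p` result bits, and a workspace register `Fin d`. -/
abbrev QIdx (N p d : ℕ) := (Fin p → Fin N) × (Fin p → Bool) × Fin d

/-- The `p`-parallel oracle unitary for the oracle string `x : Fin N → Bool`, as a matrix:
`|i₁,…,i_p; b₁,…,b_p; w⟩ ↦ |i₁,…,i_p; b₁ ⊕ x_{i₁}, …, b_p ⊕ x_{i_p}; w⟩`. -/
def oracleMatrix {N p d : ℕ} (x : Fin N → Bool) : Matrix (QIdx N p d) (QIdx N p d) ℂ :=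
  Matrix.of fun k k' =>
    if k.1 = k'.1 ∧ k.2.2 = k'.2.2 ∧ (∀ j, k.2.1 j = xor (k'.2.1 j) (x (k'.1 j)))
    then 1 else 0

/-- The state of the algorithm after `t` rounds of parallel queries (interleaved with the
unitaries `U 0, …, U t`), starting from the basis state `e₀`:
`U t · O_x^{⊗p} · U (t-1) ⋯ U 1 · O_x^{⊗p} · U 0 |e₀⟩`. -/
noncomputable def algState {N p d : ℕ} (U : ℕ → Matrix (QIdx N p d) (QIdx N p d) ℂ)
    (x : Fin N → Bool) (e₀ : QIdx N p d) : ℕ → EuclideanSpace ℂ (QIdx N p d)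
  | 0 => WithLp.toLp 2 ((U 0).mulVec fun k => if k = e₀ then 1 else 0)
  | (t + 1) => WithLp.toLp 2 ((U (t + 1)).mulVec ((oracleMatrix x).mulVec (algState U x e₀ t)))

noncomputable def inn {ι : Type*} [Fintype ι] (u v : ι → ℂ) : ℂ :=
  ∑ k, (starRingEnd ℂ) (u k) * v k

noncomputable def n2 {ι : Type*} [Fintype ι] (u : ι → ℂ) : ℝ := ∑ k, ‖u k‖^2

lemma inn_self {ι : Type*} [Fintype ι] (u : ι → ℂ) : inn u u = (n2 u : ℝ) := by
  unfold inn n2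
  push_cast
  refine Finset.sum_congr rfl fun k _ => ?_
  rw [Complex.conj_mul']

lemma abs_inn_le {ι : Type*} [Fintype ι] (u v : ι → ℂ) (s : Finset ι) :
    ‖∑ k ∈ s, (starRingEnd ℂ) (u k) * v k‖ ≤ ∑ k ∈ s, ‖u k‖ * ‖v k‖ := by
  refine le_trans (norm_sum_le _ _) ?_
  refine Finset.sum_le_sum fun k _ => ?_
  rw [norm_mul]
  simp

lemma inn_mulVec_unitary {ι : Type*} [Fintype ι] [DecidableEq ι] (M : Matrix ι ι ℂ)
    (hM : M ∈ Matrix.unitaryGroup ι ℂ) (u v : ι → ℂ) :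
    inn (M.mulVec u) (M.mulVec v) = inn u v := by
  have h1 : star M * M = 1 := Matrix.mem_unitaryGroup_iff'.mp hM
  have key : ∀ j j', (∑ k, (starRingEnd ℂ) (M k j) * M k j') = if j = j' then 1 else 0 := by
    intro j j'
    have := congrFun (congrFun h1 j) j'
    simpa [Matrix.mul_apply, Matrix.one_apply, Matrix.star_apply] using this
  unfold inn
  simp only [Matrix.mulVec, dotProduct, map_sum, map_mul, Finset.sum_mul,
    Finset.mul_sum]
  rw [Finset.sum_comm]
  calc (∑ j', ∑ k, ∑ j, (starRingEnd ℂ) (M k j) * (starRingEnd ℂ) (u j) * (M k j' * v j'))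
      = ∑ j', ∑ j, ((starRingEnd ℂ) (u j) * v j') * ∑ k, (starRingEnd ℂ) (M k j) * M k j' := by
        refine Finset.sum_congr rfl fun j' _ => ?_
        rw [Finset.sum_comm]
        refine Finset.sum_congr rfl fun j _ => ?_
        rw [Finset.mul_sum]
        refine Finset.sum_congr rfl fun k _ => ?_
        ring
    _ = ∑ j, (starRingEnd ℂ) (u j) * v j := by
        simp [key]

lemma n2_mulVec_unitary {ι : Type*} [Fintype ι] [DecidableEq ι] (M : Matrix ι ι ℂ)
    (hM : M ∈ Matrix.unitaryGroup ι ℂ) (u : ι → ℂ) :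
    n2 (M.mulVec u) = n2 u := by
  have := inn_mulVec_unitary M hM u u
  rw [inn_self, inn_self] at this
  exact_mod_cast this

def osig {N p d : ℕ} (x : Fin N → Bool) (k : QIdx N p d) : QIdx N p d :=
  (k.1, fun j => xor (k.2.1 j) (x (k.1 j)), k.2.2)

lemma osig_osig {N p d : ℕ} (x : Fin N → Bool) (k : QIdx N p d) : osig x (osig x k) = k := by
  unfold osig
  refine Prod.ext rfl (Prod.ext ?_ rfl)
  funext j
  simp [Bool.xor_assoc]

@[simp] lemma osig_fst {N p d : ℕ} (x : Fin N → Bool) (k : QIdx N p d) : (osig x k).1 = k.1 := rfl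

def osigEquiv {N p d : ℕ} (x : Fin N → Bool) : Equiv (QIdx N p d) (QIdx N p d) :=
  ⟨osig x, osig x, osig_osig x, osig_osig x⟩

lemma oracle_cond_iff {N p d : ℕ} (x : Fin N → Bool) (k k' : QIdx N p d) :
    (k.1 = k'.1 ∧ k.2.2 = k'.2.2 ∧ (∀ j, k.2.1 j = xor (k'.2.1 j) (x (k'.1 j)))) ↔
      k' = osig x k := by
  constructor
  · rintro ⟨h1, h2, h3⟩
    refine Prod.ext h1.symm (Prod.ext ?_ h2.symm)
    funext j
    have := h3 j
    rw [← h1] at this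
    simp only [osig]
    rw [this]
    simp [Bool.xor_assoc]
  · rintro rfl
    refine ⟨rfl, rfl, fun j => ?_⟩
    simp [osig, Bool.xor_assoc]

lemma oracle_mulVec {N p d : ℕ} (x : Fin N → Bool) (v : QIdx N p d → ℂ) (k : QIdx N p d) :
    (oracleMatrix x).mulVec v k = v (osig x k) := by
  unfold oracleMatrix Matrix.mulVec dotProduct
  simp only [Matrix.of_apply]
  have : ∀ k' : QIdx N p d, (if k.1 = k'.1 ∧ k.2.2 = k'.2.2 ∧
      (∀ j, k.2.1 j = xor (k'.2.1 j) (x (k'.1 j))) then (1:ℂ) else 0) * v k'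
      = if k' = osig x k then v k' else 0 := by
    intro k'
    by_cases hc : k' = osig x k
    · rw [if_pos ((oracle_cond_iff x k k').mpr hc), if_pos hc, one_mul]
    · rw [if_neg (fun hh => hc ((oracle_cond_iff x k k').mp hh)), if_neg hc, zero_mul]
  rw [Finset.sum_congr rfl fun k' _ => this k']
  rw [Finset.sum_ite_eq' Finset.univ (osig x k) v, if_pos (Finset.mem_univ _)]

noncomputable def Qs {N p d : ℕ} (i : Fin p → Fin N) (u : QIdx N p d → ℂ) : ℝ :=
  ∑ k ∈ Finset.univ.filter (fun k : QIdx N p d => k.1 = i), ‖u k‖^2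

lemma Qs_nonneg {N p d : ℕ} (i : Fin p → Fin N) (u : QIdx N p d → ℂ) : 0 ≤ Qs i u :=
  Finset.sum_nonneg fun k _ => sq_nonneg _

lemma sum_Qs {N p d : ℕ} (u : QIdx N p d → ℂ) : ∑ i, Qs i u = n2 u := by
  unfold Qs n2
  exact Finset.sum_fiberwise Finset.univ (fun k : QIdx N p d => k.1) (fun k => ‖u k‖^2)

/-- reindexing a fiber sum by osig -/
lemma fiber_sum_osig {N p d : ℕ} (x : Fin N → Bool) (i : Fin p → Fin N)
    (f : QIdx N p d → ℝ) :
    ∑ k ∈ Finset.univ.filter (fun k : QIdx N p d => k.1 = i), f (osig x k)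
      = ∑ k ∈ Finset.univ.filter (fun k : QIdx N p d => k.1 = i), f k := by
  refine Finset.sum_nbij' (fun k => osig x k) (fun k => osig x k) ?_ ?_ ?_ ?_ ?_
  · intro k hk; simp only [Finset.mem_filter, Finset.mem_univ, true_and] at *; simpa using hk
  · intro k hk; simp only [Finset.mem_filter, Finset.mem_univ, true_and] at *; simpa using hk
  · intro k _; exact osig_osig x k
  · intro k _; exact osig_osig x k
  · intro k _; rfl

lemma fiber_sum_osig' {N p d : ℕ} (x : Fin N → Bool) (i : Fin p → Fin N)
    (f : QIdx N p d → ℂ) :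
    ∑ k ∈ Finset.univ.filter (fun k : QIdx N p d => k.1 = i), f (osig x k)
      = ∑ k ∈ Finset.univ.filter (fun k : QIdx N p d => k.1 = i), f k := by
  refine Finset.sum_nbij' (fun k => osig x k) (fun k => osig x k) ?_ ?_ ?_ ?_ ?_
  · intro k hk; simp only [Finset.mem_filter, Finset.mem_univ, true_and] at *; simpa using hk
  · intro k hk; simp only [Finset.mem_filter, Finset.mem_univ, true_and] at *; simpa using hk
  · intro k _; exact osig_osig x k
  · intro k _; exact osig_osig x k
  · intro k _; rfl

/-- per-query progress bound -/
lemma query_progress {N p d : ℕ} (x y : Fin N → Bool) (u v : QIdx N p d → ℂ) :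
    ‖inn ((oracleMatrix x).mulVec u) ((oracleMatrix y).mulVec v) - inn u v‖
      ≤ 2 * ∑ i ∈ Finset.univ.filter (fun i : Fin p → Fin N => ∃ j, x (i j) ≠ y (i j)),
          Real.sqrt (Qs i u) * Real.sqrt (Qs i v) := by
  classical
  set D := Finset.univ.filter (fun i : Fin p → Fin N => ∃ j, x (i j) ≠ y (i j)) with hD
  -- fiberwise decomposition
  have hLHS : inn ((oracleMatrix x).mulVec u) ((oracleMatrix y).mulVec v)
      = ∑ i : Fin p → Fin N, ∑ k ∈ Finset.univ.filter (fun k : QIdx N p d => k.1 = i),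
          (starRingEnd ℂ) (u (osig x k)) * v (osig y k) := by
    rw [Finset.sum_fiberwise Finset.univ (fun k : QIdx N p d => k.1)
      (fun k => (starRingEnd ℂ) (u (osig x k)) * v (osig y k))]
    unfold inn
    refine Finset.sum_congr rfl fun k _ => ?_
    rw [oracle_mulVec, oracle_mulVec]
  have hRHS : inn u v
      = ∑ i : Fin p → Fin N, ∑ k ∈ Finset.univ.filter (fun k : QIdx N p d => k.1 = i),
          (starRingEnd ℂ) (u k) * v k := by
    rw [Finset.sum_fiberwise Finset.univ (fun k : QIdx N p d => k.1)
      (fun k => (starRingEnd ℂ) (u k) * v k)]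
    rfl
  -- off-D fibers agree
  have hoff : ∀ i ∉ D,
      (∑ k ∈ Finset.univ.filter (fun k : QIdx N p d => k.1 = i),
          (starRingEnd ℂ) (u (osig x k)) * v (osig y k))
        = ∑ k ∈ Finset.univ.filter (fun k : QIdx N p d => k.1 = i),
          (starRingEnd ℂ) (u k) * v k := by
    intro i hi
    have hxy : ∀ j, x (i j) = y (i j) := by
      simp only [hD, Finset.mem_filter, Finset.mem_univ, true_and, not_exists, ne_eq,
        not_not] at hi
      exact hi
    have hss : ∀ k ∈ Finset.univ.filter (fun k : QIdx N p d => k.1 = i),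
        (starRingEnd ℂ) (u (osig x k)) * v (osig y k)
          = (fun k => (starRingEnd ℂ) (u k) * v k) (osig x k) := by
      intro k hk
      have hk1 : k.1 = i := (Finset.mem_filter.mp hk).2
      have hfun : (fun j => xor (k.2.1 j) (y (k.1 j))) = (fun j => xor (k.2.1 j) (x (k.1 j))) := by
        funext j
        rw [hk1, hxy j]
      have : osig y k = osig x k := by
        unfold osig
        rw [hfun]
      rw [this]
    rw [Finset.sum_congr rfl hss,
      fiber_sum_osig' x i (fun k => (starRingEnd ℂ) (u k) * v k)]
  -- difference supported on D
  have hdiff : inn ((oracleMatrix x).mulVec u) ((oracleMatrix y).mulVec v) - inn u v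
      = ∑ i ∈ D,
          ((∑ k ∈ Finset.univ.filter (fun k : QIdx N p d => k.1 = i),
            (starRingEnd ℂ) (u (osig x k)) * v (osig y k))
          - ∑ k ∈ Finset.univ.filter (fun k : QIdx N p d => k.1 = i),
            (starRingEnd ℂ) (u k) * v k) := by
    rw [hLHS, hRHS, ← Finset.sum_sub_distrib]
    rw [← Finset.sum_subset (Finset.subset_univ D)]
    intro i _ hi
    rw [hoff i hi, sub_self]
  rw [hdiff]
  refine le_trans (norm_sum_le _ _) ?_
  rw [Finset.mul_sum]
  refine Finset.sum_le_sum fun i _ => ?_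
  -- per fiber bound
  have hCS : ∀ u' v' : QIdx N p d → ℂ,
      ‖∑ k ∈ Finset.univ.filter (fun k : QIdx N p d => k.1 = i),
        (starRingEnd ℂ) (u' k) * v' k‖
      ≤ Real.sqrt (∑ k ∈ Finset.univ.filter (fun k : QIdx N p d => k.1 = i), ‖u' k‖^2)
        * Real.sqrt (∑ k ∈ Finset.univ.filter (fun k : QIdx N p d => k.1 = i), ‖v' k‖^2) := by
    intro u' v'
    refine le_trans (abs_inn_le u' v' _) ?_
    exact Real.sum_mul_le_sqrt_mul_sqrt _ _ _
  have h1 : ‖∑ k ∈ Finset.univ.filter (fun k : QIdx N p d => k.1 = i),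
        (starRingEnd ℂ) (u (osig x k)) * v (osig y k)‖
      ≤ Real.sqrt (Qs i u) * Real.sqrt (Qs i v) := by
    refine le_trans (abs_inn_le (fun k => u (osig x k)) (fun k => v (osig y k)) _) ?_
    refine le_trans (Real.sum_mul_le_sqrt_mul_sqrt _ _ _) ?_
    rw [fiber_sum_osig x i (fun k => ‖u k‖^2), fiber_sum_osig y i (fun k => ‖v k‖^2)]
    exact le_of_eq rfl
  have h2 : ‖∑ k ∈ Finset.univ.filter (fun k : QIdx N p d => k.1 = i),
        (starRingEnd ℂ) (u k) * v k‖
      ≤ Real.sqrt (Qs i u) * Real.sqrt (Qs i v) := hCS u v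
  calc ‖(_ : ℂ)‖ ≤ ‖(_ : ℂ)‖ + ‖(_ : ℂ)‖ := norm_sub_le _ _
    _ ≤ Real.sqrt (Qs i u) * Real.sqrt (Qs i v) + Real.sqrt (Qs i u) * Real.sqrt (Qs i v) :=
        add_le_add h1 h2
    _ = 2 * (Real.sqrt (Qs i u) * Real.sqrt (Qs i v)) := by ring


open Finset

lemma sum_over_R {A : Type*} [DecidableEq A] {M : Type*} [AddCommMonoid M]
    (X Y : Finset A) (R : Finset (A × A)) (hRsub : R ⊆ X ×ˢ Y) (f : A × A → M) :
    ∑ r ∈ R, f r = ∑ x ∈ X, ∑ y ∈ Y, if (x, y) ∈ R then f (x, y) else 0 := by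
  classical
  have h2 : ∑ r ∈ X ×ˢ Y, (if r ∈ R then f r else 0)
      = ∑ x ∈ X, ∑ y ∈ Y, (if (x, y) ∈ R then f (x, y) else 0) := Finset.sum_product _ _ _
  rw [← h2, ← Finset.sum_filter, Finset.filter_mem_eq_inter, Finset.inter_eq_right.mpr hRsub]

lemma card_R_ge {A : Type*} [DecidableEq A]
    (X Y : Finset A) (R : Finset (A × A)) (hRsub : R ⊆ X ×ˢ Y) (h : ℕ)
    (hrow : ∀ x ∈ X, h ≤ (Y.filter fun y => (x, y) ∈ R).card) :
    h * X.card ≤ R.card := by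
  classical
  have hs : R.card = ∑ x ∈ X, (Y.filter fun y => (x, y) ∈ R).card := by
    have := sum_over_R X Y R hRsub (fun _ => (1 : ℕ))
    simp only [Finset.sum_const, smul_eq_mul, mul_one] at this
    rw [this]
    refine Finset.sum_congr rfl fun x _ => ?_
    rw [Finset.card_filter]
  rw [hs]
  calc h * X.card = ∑ _x ∈ X, h := by rw [Finset.sum_const, smul_eq_mul, mul_comm]
    _ ≤ _ := Finset.sum_le_sum hrow

lemma count_bound {A : Type*} [DecidableEq A] {ι : Type*} [Fintype ι] [DecidableEq ι]
    (X Y : Finset A) (R : Finset (A × A)) (hRsub : R ⊆ X ×ˢ Y)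
    (D : A × A → Finset ι)
    (g : A → ι → ℝ) (hg : ∀ x i, 0 ≤ g x i)
    (hgsum : ∀ x ∈ X, ∑ i, g x i = 1)
    (L : ℕ) (hcard : ∀ i, ∀ x ∈ X, (Y.filter fun y => (x, y) ∈ R ∧ i ∈ D (x, y)).card ≤ L) :
    ∑ r ∈ R, ∑ i ∈ D r, g r.1 i ≤ L * X.card := by
  classical
  rw [sum_over_R X Y R hRsub]
  have step1 : ∀ x ∈ X, ∀ y ∈ Y,
      (if (x, y) ∈ R then ∑ i ∈ D (x, y), g x i else 0)
        = ∑ i : ι, if (x, y) ∈ R ∧ i ∈ D (x, y) then g x i else 0 := by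
    intro x _ y _
    by_cases hxy : (x, y) ∈ R
    · rw [if_pos hxy]
      have : ∀ i : ι, (if (x, y) ∈ R ∧ i ∈ D (x, y) then g x i else 0)
          = if i ∈ D (x, y) then g x i else 0 := by
        intro i; simp [hxy]
      rw [Finset.sum_congr rfl fun i _ => this i, Finset.sum_ite_mem, Finset.univ_inter]
    · rw [if_neg hxy]
      simp [hxy]
  calc (∑ x ∈ X, ∑ y ∈ Y, if (x, y) ∈ R then ∑ i ∈ D (x, y), g x i else 0)
      = ∑ x ∈ X, ∑ i : ι, ∑ y ∈ Y, if (x, y) ∈ R ∧ i ∈ D (x, y) then g x i else 0 := by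
        refine Finset.sum_congr rfl fun x hx => ?_
        rw [Finset.sum_congr rfl (fun y hy => step1 x hx y hy), Finset.sum_comm]
    _ = ∑ x ∈ X, ∑ i : ι, ((Y.filter fun y => (x, y) ∈ R ∧ i ∈ D (x, y)).card : ℝ) * g x i := by
        refine Finset.sum_congr rfl fun x _ => Finset.sum_congr rfl fun i _ => ?_
        rw [← Finset.sum_filter, Finset.sum_const, nsmul_eq_mul]
    _ ≤ ∑ x ∈ X, ∑ i : ι, (L : ℝ) * g x i := by
        refine Finset.sum_le_sum fun x hx => Finset.sum_le_sum fun i _ => ?_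
        exact mul_le_mul_of_nonneg_right (by exact_mod_cast hcard i x hx) (hg x i)
    _ = L * X.card := by
        have : ∀ x ∈ X, ∑ i : ι, (L : ℝ) * g x i = (L : ℝ) := by
          intro x hx
          rw [← Finset.mul_sum, hgsum x hx, mul_one]
        rw [Finset.sum_congr rfl this, Finset.sum_const, nsmul_eq_mul, mul_comm]

lemma amgm (c₁ c₂ A B : ℝ) (hc₁ : 0 < c₁) (hc₂ : 0 < c₂) (hc : c₁ * c₂ = 1)
    (hA : 0 ≤ A) (hB : 0 ≤ B) :
    2 * (Real.sqrt A * Real.sqrt B) ≤ c₁ * A + c₂ * B := by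
  have h1 : Real.sqrt c₁ * Real.sqrt c₂ = 1 := by
    rw [← Real.sqrt_mul hc₁.le, hc, Real.sqrt_one]
  nlinarith [sq_nonneg (Real.sqrt c₁ * Real.sqrt A - Real.sqrt c₂ * Real.sqrt B),
    Real.sq_sqrt hA, Real.sq_sqrt hB, Real.sq_sqrt hc₁.le, Real.sq_sqrt hc₂.le,
    Real.sqrt_nonneg A, Real.sqrt_nonneg B, Real.sqrt_nonneg c₁, Real.sqrt_nonneg c₂,
    mul_nonneg (Real.sqrt_nonneg A) (Real.sqrt_nonneg B)]

lemma fidelity {ι : Type*} [Fintype ι] [DecidableEq ι] (u v : ι → ℂ)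
    (hu : n2 u = 1) (hv : n2 v = 1) (A : Finset ι)
    (hvA : ∑ k ∈ A, ‖v k‖^2 ≤ 1/10)
    (huA : ∑ k ∈ Aᶜ, ‖u k‖^2 ≤ 1/10) :
    (inn u v).re ≤ 2 * Real.sqrt (1/10) := by
  have husub : ∀ s : Finset ι, ∑ k ∈ s, ‖u k‖^2 ≤ 1 := by
    intro s
    rw [← hu]
    exact Finset.sum_le_sum_of_subset_of_nonneg (Finset.subset_univ s)
      (fun k _ _ => sq_nonneg _)
  have hvsub : ∀ s : Finset ι, ∑ k ∈ s, ‖v k‖^2 ≤ 1 := by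
    intro s
    rw [← hv]
    exact Finset.sum_le_sum_of_subset_of_nonneg (Finset.subset_univ s)
      (fun k _ _ => sq_nonneg _)
  have hsplit : inn u v = (∑ k ∈ A, (starRingEnd ℂ) (u k) * v k)
      + ∑ k ∈ Aᶜ, (starRingEnd ℂ) (u k) * v k := by
    rw [inn, ← Finset.sum_add_sum_compl A]
  have cs : ∀ (s : Finset ι) (a b : ℝ), (∑ k ∈ s, ‖u k‖^2) ≤ a → (∑ k ∈ s, ‖v k‖^2) ≤ b →
      ‖∑ k ∈ s, (starRingEnd ℂ) (u k) * v k‖ ≤ Real.sqrt a * Real.sqrt b := by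
    intro s a b hA hB
    refine le_trans (abs_inn_le u v s) ?_
    refine le_trans (Real.sum_mul_le_sqrt_mul_sqrt s _ _) ?_
    exact mul_le_mul (Real.sqrt_le_sqrt hA) (Real.sqrt_le_sqrt hB)
      (Real.sqrt_nonneg _) (Real.sqrt_nonneg _)
  calc (inn u v).re ≤ ‖inn u v‖ := Complex.re_le_norm _
    _ ≤ ‖∑ k ∈ A, (starRingEnd ℂ) (u k) * v k‖
        + ‖∑ k ∈ Aᶜ, (starRingEnd ℂ) (u k) * v k‖ := by
          rw [hsplit]; exact norm_add_le _ _
    _ ≤ Real.sqrt 1 * Real.sqrt (1/10) + Real.sqrt (1/10) * Real.sqrt 1 :=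
        add_le_add (cs A 1 (1/10) (husub A) hvA) (cs Aᶜ (1/10) 1 huA (hvsub Aᶜ))
    _ = 2 * Real.sqrt (1/10) := by rw [Real.sqrt_one]; ring

lemma sqrt_tenth_le : Real.sqrt (1/10) ≤ 1/3 := by
  rw [show (1/3 : ℝ) = Real.sqrt ((1/3)^2) from (Real.sqrt_sq (by norm_num)).symm]
  exact Real.sqrt_le_sqrt (by norm_num)


set_option maxHeartbeats 1000000 in
/-- **Combinatorial parallel adversary bound (Theorem 2).**
If `R ⊆ X × Y` has minimum degrees `h, h'` and the zeroed-out relations `R^{i₁⋯i_p}` have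
maximum degrees `ℓ, ℓ'`, and a `T`-step `p`-parallel algorithm computes a value in `F z`
with probability at least `9/10` for every oracle `z ∈ X ∪ Y`, where `F` has disjoint
value sets across `X` and `Y`, then `T ≥ (1/6)·√(h·h'/(ℓ·ℓ'))`. -/
theorem combinatorial_parallel_adversary_bound
    {N p d T : ℕ} (hp : 1 ≤ p) {V : Type*}
    (X Y : Finset (Fin N → Bool)) (hXY : Disjoint X Y)
    (hX : X.Nonempty) (hY : Y.Nonempty)
    (F : (Fin N → Bool) → Set V) [∀ z, DecidablePred (· ∈ F z)]
    (hF : ∀ a ∈ X, ∀ b ∈ Y, F a ∩ F b = ∅)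
    (R : Finset ((Fin N → Bool) × (Fin N → Bool)))
    (hR : ∀ r ∈ R, r.1 ∈ X ∧ r.2 ∈ Y)
    (h h' ℓ ℓ' : ℕ) (hh : 1 ≤ h) (hh' : 1 ≤ h') (hℓ : 1 ≤ ℓ) (hℓ' : 1 ≤ ℓ')
    (hrow : ∀ a ∈ X, h ≤ (Y.filter fun b => (a, b) ∈ R).card)
    (hcol : ∀ b ∈ Y, h' ≤ (X.filter fun a => (a, b) ∈ R).card)
    (hrow' : ∀ i : Fin p → Fin N, ∀ a ∈ X,
      (Y.filter fun b => (a, b) ∈ R ∧ ∃ j, a (i j) ≠ b (i j)).card ≤ ℓ)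
    (hcol' : ∀ i : Fin p → Fin N, ∀ b ∈ Y,
      (X.filter fun a => (a, b) ∈ R ∧ ∃ j, a (i j) ≠ b (i j)).card ≤ ℓ')
    (out : QIdx N p d → V)
    (U : ℕ → Matrix (QIdx N p d) (QIdx N p d) ℂ)
    (hU : ∀ t, U t ∈ Matrix.unitaryGroup (QIdx N p d) ℂ)
    (e₀ : QIdx N p d)
    (hsucc : ∀ z ∈ X ∪ Y,
      (9 : ℝ) / 10 ≤
        ∑ k ∈ Finset.univ.filter (fun k => out k ∈ F z), ‖algState U z e₀ T k‖ ^ 2) :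
    (1 / 6 : ℝ) * Real.sqrt ((h * h' : ℝ) / (ℓ * ℓ')) ≤ T := by
  -- the state as a plain function
  set ψ : (Fin N → Bool) → ℕ → QIdx N p d → ℂ :=
    fun z t k => algState U z e₀ t k with hψdef
  -- R sits inside X ×ˢ Y
  have hRsub : R ⊆ X ×ˢ Y := by
    intro r hr
    rw [Finset.mem_product]
    exact hR r hr
  -- all states are unit vectors
  have hn1 : ∀ z t, n2 (ψ z t) = 1 := by
    intro z t
    induction t with
    | zero =>
      show n2 ((U 0).mulVec fun k => if k = e₀ then 1 else 0) = 1
      rw [n2_mulVec_unitary _ (hU 0)]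
      unfold n2
      have hterm : ∀ k : QIdx N p d, ‖(if k = e₀ then (1 : ℂ) else 0)‖^2
          = if k = e₀ then (1 : ℝ) else 0 := by
        intro k; by_cases hk : k = e₀ <;> simp [hk]
      rw [Finset.sum_congr rfl fun k _ => hterm k,
        Finset.sum_ite_eq' Finset.univ e₀ (fun _ => (1 : ℝ)), if_pos (Finset.mem_univ _)]
    | succ t ih =>
      show n2 ((U (t+1)).mulVec ((oracleMatrix z).mulVec (ψ z t))) = 1
      rw [n2_mulVec_unitary _ (hU (t+1))]
      have ho : (oracleMatrix z).mulVec (ψ z t) = fun k => ψ z t (osig z k) :=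
        funext (oracle_mulVec z _)
      rw [ho]
      have hsum : n2 (fun k => ψ z t (osig z k)) = n2 (ψ z t) := by
        unfold n2
        exact Equiv.sum_comp (osigEquiv z) (fun k => ‖ψ z t k‖^2)
      rw [hsum, ih]
  -- progress function
  set W : ℕ → ℝ := fun t => ∑ r ∈ R, (inn (ψ r.1 t) (ψ r.2 t)).re with hWdef
  -- initial progress
  have hW0 : W 0 = R.card := by
    have hterm : ∀ r : (Fin N → Bool) × (Fin N → Bool),
        (inn (ψ r.1 0) (ψ r.2 0)).re = 1 := by
      intro r
      have heq : ψ r.1 0 = ψ r.2 0 := rfl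
      rw [heq, inn_self, hn1]
      simp
    rw [hWdef]
    simp only [hterm, Finset.sum_const, nsmul_eq_mul, mul_one]
  -- the balancing constants
  have hhp : (0:ℝ) < h := by exact_mod_cast hh
  have hhp' : (0:ℝ) < h' := by exact_mod_cast hh'
  have hℓp : (0:ℝ) < ℓ := by exact_mod_cast hℓ
  have hℓp' : (0:ℝ) < ℓ' := by exact_mod_cast hℓ'
  set β : ℝ := Real.sqrt ((ℓ * ℓ' : ℝ) / (h * h')) with hβdef
  have hβpos : 0 < β := Real.sqrt_pos.mpr (by positivity)
  have hβsq : β^2 = (ℓ * ℓ' : ℝ) / (h * h') := Real.sq_sqrt (by positivity)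
  set c₁ : ℝ := β * h / ℓ with hc₁def
  set c₂ : ℝ := β * h' / ℓ' with hc₂def
  have hc₁pos : 0 < c₁ := by positivity
  have hc₂pos : 0 < c₂ := by positivity
  have hβ2' : β * β * ((h:ℝ) * h') = (ℓ:ℝ) * ℓ' := by
    rw [show β * β = β^2 by ring, hβsq]
    field_simp
  have hc₁c₂ : c₁ * c₂ = 1 := by
    have hcc : c₁ * c₂ = (β * β) * ((h:ℝ) * h') / ((ℓ:ℝ) * ℓ') := by
      rw [hc₁def, hc₂def]; ring
    rw [hcc, hβ2', div_self (by positivity)]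
  -- per step bound
  have step : ∀ t, W t - W (t+1) ≤ 2 * β * R.card := by
    intro t
    have pair : ∀ r ∈ R,
        (inn (ψ r.1 t) (ψ r.2 t)).re - (inn (ψ r.1 (t+1)) (ψ r.2 (t+1))).re
          ≤ 2 * ∑ i ∈ Finset.univ.filter
              (fun i : Fin p → Fin N => ∃ j, r.1 (i j) ≠ r.2 (i j)),
              Real.sqrt (Qs i (ψ r.1 t)) * Real.sqrt (Qs i (ψ r.2 t)) := by
      intro r _
      have h1 : inn (ψ r.1 (t+1)) (ψ r.2 (t+1))
          = inn ((oracleMatrix r.1).mulVec (ψ r.1 t)) ((oracleMatrix r.2).mulVec (ψ r.2 t)) := by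
        show inn ((U (t+1)).mulVec ((oracleMatrix r.1).mulVec (ψ r.1 t)))
            ((U (t+1)).mulVec ((oracleMatrix r.2).mulVec (ψ r.2 t))) = _
        exact inn_mulVec_unitary _ (hU (t+1)) _ _
      calc (inn (ψ r.1 t) (ψ r.2 t)).re - (inn (ψ r.1 (t+1)) (ψ r.2 (t+1))).re
          = (inn (ψ r.1 t) (ψ r.2 t) - inn (ψ r.1 (t+1)) (ψ r.2 (t+1))).re := by
            rw [Complex.sub_re]
        _ ≤ ‖inn (ψ r.1 t) (ψ r.2 t) - inn (ψ r.1 (t+1)) (ψ r.2 (t+1))‖ :=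
            Complex.re_le_norm _
        _ = ‖inn (ψ r.1 (t+1)) (ψ r.2 (t+1)) - inn (ψ r.1 t) (ψ r.2 t)‖ :=
            norm_sub_rev _ _
        _ ≤ _ := by
            rw [h1]
            exact query_progress r.1 r.2 (ψ r.1 t) (ψ r.2 t)
    have amg : ∀ r ∈ R,
        (2 : ℝ) * ∑ i ∈ Finset.univ.filter
            (fun i : Fin p → Fin N => ∃ j, r.1 (i j) ≠ r.2 (i j)),
            Real.sqrt (Qs i (ψ r.1 t)) * Real.sqrt (Qs i (ψ r.2 t))
          ≤ ∑ i ∈ Finset.univ.filter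
              (fun i : Fin p → Fin N => ∃ j, r.1 (i j) ≠ r.2 (i j)),
              (c₁ * Qs i (ψ r.1 t) + c₂ * Qs i (ψ r.2 t)) := by
      intro r _
      rw [Finset.mul_sum]
      refine Finset.sum_le_sum fun i _ => ?_
      exact amgm c₁ c₂ _ _ hc₁pos hc₂pos hc₁c₂ (Qs_nonneg _ _) (Qs_nonneg _ _)
    -- combinatorial bounds
    have hS₁ : ∑ r ∈ R, ∑ i ∈ Finset.univ.filter
        (fun i : Fin p → Fin N => ∃ j, r.1 (i j) ≠ r.2 (i j)), Qs i (ψ r.1 t)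
          ≤ ℓ * X.card := by
      refine count_bound X Y R hRsub
        (fun r => Finset.univ.filter (fun i : Fin p → Fin N => ∃ j, r.1 (i j) ≠ r.2 (i j)))
        (fun x i => Qs i (ψ x t)) (fun x i => Qs_nonneg i _) ?_ ℓ ?_
      · intro x _
        rw [sum_Qs, hn1]
      · intro i x hx
        refine le_trans (le_of_eq (congrArg Finset.card
          (Finset.filter_congr fun y _ => ?_))) (hrow' i x hx)
        simp only [Finset.mem_filter, Finset.mem_univ, true_and]
    have hS₂ : ∑ r ∈ R, ∑ i ∈ Finset.univ.filter
        (fun i : Fin p → Fin N => ∃ j, r.1 (i j) ≠ r.2 (i j)), Qs i (ψ r.2 t)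
          ≤ ℓ' * Y.card := by
      have hmap : ∑ r ∈ R, ∑ i ∈ Finset.univ.filter
          (fun i : Fin p → Fin N => ∃ j, r.1 (i j) ≠ r.2 (i j)), Qs i (ψ r.2 t)
            = ∑ s ∈ R.map (Equiv.prodComm _ _).toEmbedding,
              ∑ i ∈ Finset.univ.filter
                (fun i : Fin p → Fin N => ∃ j, s.2 (i j) ≠ s.1 (i j)), Qs i (ψ s.1 t) := by
        rw [Finset.sum_map]
        rfl
      rw [hmap]
      refine count_bound Y X (R.map (Equiv.prodComm _ _).toEmbedding) ?_
        (fun s => Finset.univ.filter (fun i : Fin p → Fin N => ∃ j, s.2 (i j) ≠ s.1 (i j)))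
        (fun y i => Qs i (ψ y t)) (fun y i => Qs_nonneg i _) ?_ ℓ' ?_
      · intro s hs
        rw [Finset.mem_map_equiv] at hs
        rw [Finset.mem_product]
        have := hR _ hs
        exact ⟨this.2, this.1⟩
      · intro y _
        rw [sum_Qs, hn1]
      · intro i y hy
        refine le_trans (le_of_eq (congrArg Finset.card
          (Finset.filter_congr fun x _ => ?_))) (hcol' i y hy)
        rw [Finset.mem_map_equiv]
        simp only [Finset.mem_filter, Finset.mem_univ, true_and]
        rfl
    -- cardinality bounds
    have hXc : h * X.card ≤ R.card := card_R_ge X Y R hRsub h hrow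
    have hYc : h' * Y.card ≤ R.card := by
      have := card_R_ge Y X (R.map (Equiv.prodComm _ _).toEmbedding) ?_ h' ?_
      · rwa [Finset.card_map] at this
      · intro s hs
        rw [Finset.mem_map_equiv] at hs
        rw [Finset.mem_product]
        have := hR _ hs
        exact ⟨this.2, this.1⟩
      · intro y hy
        have hfilter : (X.filter fun x => (y, x) ∈ R.map (Equiv.prodComm _ _).toEmbedding)
            = X.filter (fun x => (x, y) ∈ R) := by
          refine Finset.filter_congr fun x _ => ?_
          rw [Finset.mem_map_equiv]
          rfl
        rw [hfilter]
        exact hcol y hy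
    calc W t - W (t+1)
        = ∑ r ∈ R, ((inn (ψ r.1 t) (ψ r.2 t)).re - (inn (ψ r.1 (t+1)) (ψ r.2 (t+1))).re) := by
          rw [hWdef, Finset.sum_sub_distrib]
      _ ≤ ∑ r ∈ R, ∑ i ∈ Finset.univ.filter
            (fun i : Fin p → Fin N => ∃ j, r.1 (i j) ≠ r.2 (i j)),
            (c₁ * Qs i (ψ r.1 t) + c₂ * Qs i (ψ r.2 t)) :=
          Finset.sum_le_sum fun r hr => le_trans (pair r hr) (amg r hr)
      _ = c₁ * (∑ r ∈ R, ∑ i ∈ Finset.univ.filter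
            (fun i : Fin p → Fin N => ∃ j, r.1 (i j) ≠ r.2 (i j)), Qs i (ψ r.1 t))
          + c₂ * (∑ r ∈ R, ∑ i ∈ Finset.univ.filter
            (fun i : Fin p → Fin N => ∃ j, r.1 (i j) ≠ r.2 (i j)), Qs i (ψ r.2 t)) := by
          rw [Finset.mul_sum, Finset.mul_sum, ← Finset.sum_add_distrib]
          refine Finset.sum_congr rfl fun r _ => ?_
          rw [Finset.mul_sum, Finset.mul_sum, ← Finset.sum_add_distrib]
      _ ≤ c₁ * (ℓ * X.card) + c₂ * (ℓ' * Y.card) := by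
          have t1 : (0:ℝ) ≤ c₁ := hc₁pos.le
          have t2 : (0:ℝ) ≤ c₂ := hc₂pos.le
          have b₁ := mul_le_mul_of_nonneg_left hS₁ t1
          have b₂ := mul_le_mul_of_nonneg_left hS₂ t2
          linarith
      _ ≤ β * (h * X.card) + β * (h' * Y.card) := by
          have e1 : c₁ * ((ℓ : ℝ) * X.card) = β * (h * X.card) := by
            rw [hc₁def]; field_simp
          have e2 : c₂ * ((ℓ' : ℝ) * Y.card) = β * (h' * Y.card) := by
            rw [hc₂def]; field_simp
          rw [e1, e2]
      _ ≤ 2 * β * R.card := by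
          have b1 : (h : ℝ) * X.card ≤ R.card := by exact_mod_cast hXc
          have b2 : (h' : ℝ) * Y.card ≤ R.card := by exact_mod_cast hYc
          nlinarith [hβpos.le]
  -- telescoping
  have tele : ∀ n : ℕ, W 0 - W n ≤ n * (2 * β * R.card) := by
    intro n
    induction n with
    | zero => simp
    | succ n ih =>
      have hs := step n
      push_cast
      push_cast at ih
      linarith
  -- final fidelity bound
  have hWT : W T ≤ (2 * Real.sqrt (1/10)) * R.card := by
    rw [hWdef]
    have hterm : ∀ r ∈ R, (inn (ψ r.1 T) (ψ r.2 T)).re ≤ 2 * Real.sqrt (1/10) := by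
      intro r hr
      obtain ⟨hx, hy⟩ := hR r hr
      set A : Finset (QIdx N p d) := Finset.univ.filter (fun k => out k ∈ F r.1) with hAdef
      have hdisj : ∀ w, w ∈ F r.1 → w ∉ F r.2 := by
        intro w hw1 hw2
        have := hF r.1 hx r.2 hy
        exact Set.eq_empty_iff_forall_notMem.mp this w ⟨hw1, hw2⟩
      have hvA : ∑ k ∈ A, ‖ψ r.2 T k‖^2 ≤ 1/10 := by
        have hsub : A ⊆ Finset.univ.filter (fun k => ¬ out k ∈ F r.2) := by
          intro k hk
          rw [hAdef, Finset.mem_filter] at hk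
          rw [Finset.mem_filter]
          exact ⟨hk.1, hdisj _ hk.2⟩
        have h1 : ∑ k ∈ A, ‖ψ r.2 T k‖^2
            ≤ ∑ k ∈ Finset.univ.filter (fun k => ¬ out k ∈ F r.2), ‖ψ r.2 T k‖^2 :=
          Finset.sum_le_sum_of_subset_of_nonneg hsub (fun k _ _ => sq_nonneg _)
        have h2 : ∑ k ∈ Finset.univ.filter (fun k => out k ∈ F r.2), ‖ψ r.2 T k‖^2
            + ∑ k ∈ Finset.univ.filter (fun k => ¬ out k ∈ F r.2), ‖ψ r.2 T k‖^2
            = 1 := by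
          rw [Finset.sum_filter_add_sum_filter_not]
          exact hn1 r.2 T
        have h3 := hsucc r.2 (Finset.mem_union_right X hy)
        linarith
      have huA : ∑ k ∈ Aᶜ, ‖ψ r.1 T k‖^2 ≤ 1/10 := by
        have hAc : Aᶜ = Finset.univ.filter (fun k => ¬ out k ∈ F r.1) := by
          rw [hAdef]
          ext k
          simp only [Finset.mem_compl, Finset.mem_filter, Finset.mem_univ, true_and]
        rw [hAc]
        have h2 : ∑ k ∈ Finset.univ.filter (fun k => out k ∈ F r.1), ‖ψ r.1 T k‖^2
            + ∑ k ∈ Finset.univ.filter (fun k => ¬ out k ∈ F r.1), ‖ψ r.1 T k‖^2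
            = 1 := by
          rw [Finset.sum_filter_add_sum_filter_not]
          exact hn1 r.1 T
        have h3 := hsucc r.1 (Finset.mem_union_left Y hx)
        linarith
      exact fidelity (ψ r.1 T) (ψ r.2 T) (hn1 r.1 T) (hn1 r.2 T) A hvA huA
    calc ∑ r ∈ R, (inn (ψ r.1 T) (ψ r.2 T)).re
        ≤ ∑ _r ∈ R, 2 * Real.sqrt (1/10) := Finset.sum_le_sum hterm
      _ = (2 * Real.sqrt (1/10)) * R.card := by
          rw [Finset.sum_const, nsmul_eq_mul, mul_comm]
  -- |R| is positive
  have hRpos : (0:ℝ) < R.card := by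
    have : 1 * 1 ≤ h * X.card := Nat.mul_le_mul hh (hX.card_pos)
    have := le_trans this (card_R_ge X Y R hRsub h hrow)
    exact_mod_cast lt_of_lt_of_le one_pos (by exact_mod_cast this)
  -- put everything together
  have hc23 : 2 * Real.sqrt (1/10) ≤ 2/3 := by linarith [sqrt_tenth_le]
  have hmain : (1 - 2 * Real.sqrt (1/10)) * R.card ≤ (T * (2 * β)) * R.card := by
    have := tele T
    nlinarith [hW0, hWT]
  have hdiv : 1 - 2 * Real.sqrt (1/10) ≤ T * (2 * β) :=
    le_of_mul_le_mul_right hmain hRpos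
  have hTβ : 1/6 ≤ (T : ℝ) * β := by linarith
  have hββ : Real.sqrt ((h * h' : ℝ) / (ℓ * ℓ')) = 1 / β := by
    have hmul : Real.sqrt ((h * h' : ℝ) / (ℓ * ℓ')) * β = 1 := by
      rw [hβdef, ← Real.sqrt_mul (by positivity)]
      rw [show ((h * h' : ℝ) / (ℓ * ℓ')) * ((ℓ * ℓ' : ℝ) / (h * h')) = 1 by field_simp]
      exact Real.sqrt_one
    field_simp at hmul ⊢
    linarith [hmul]
  rw [hββ, mul_one_div, div_le_iff₀ hβpos]
  linarith
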